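/- Let A, B, C, s, x be real numbers with sin s ≠ 0, and define f : ℝ → ℝ by f(y) := A + B·cos y + C·sin y. Then f is differentiable at x and its derivative satisfies f'(x) = (f(x+s) − f(x−s))/(2·sin s). In particular, taking s = π/2 yields f'(x) = (f(x + π/2) − f(x − π/2))/2. -/

import Mathlib

lemma deriv_trig_poly (A B C x : ℝ) :
    HasDerivAt (fun y => A + B * Real.cos y + C * Real.sin y)
      (-(B * Real.sin x) + C * Real.cos x) x := by
  have h := (((Real.hasDerivAt_cos x).const_mul B).const_add A).add
    ((Real.hasDerivAt_sin x).const_mul C)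
  simpa [mul_comm, mul_neg, Pi.add_def] using h

/-- exact two-evaluation shift rule for trigonometric polynomials of
degree one: for `f(y) = A + B·cos y + C·sin y` and `sin s ≠ 0`, `f` is differentiable
at `x` with `f'(x) = (f(x+s) − f(x−s))/(2 sin s)`; in particular, with `s = π/2`,
`f'(x) = (f(x+π/2) − f(x−π/2))/2`. -/
theorem parameter_shift_rule_trig
    (A B C s x : ℝ) (hs : Real.sin s ≠ 0) :
    DifferentiableAt ℝ (fun y => A + B * Real.cos y + C * Real.sin y) x ∧
    deriv (fun y => A + B * Real.cos y + C * Real.sin y) x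
      = ((A + B * Real.cos (x + s) + C * Real.sin (x + s))
          - (A + B * Real.cos (x - s) + C * Real.sin (x - s))) / (2 * Real.sin s) ∧
    deriv (fun y => A + B * Real.cos y + C * Real.sin y) x
      = ((A + B * Real.cos (x + Real.pi / 2) + C * Real.sin (x + Real.pi / 2))
          - (A + B * Real.cos (x - Real.pi / 2) + C * Real.sin (x - Real.pi / 2))) / 2 := by
  have h := deriv_trig_poly A B C x
  have hd := h.deriv
  refine ⟨h.differentiableAt, ?_, ?_⟩
  · rw [hd, Real.cos_add, Real.sin_add, Real.cos_sub, Real.sin_sub]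
    field_simp
    ring
  · rw [hd, Real.cos_add, Real.sin_add, Real.cos_sub, Real.sin_sub]
    simp
    ring
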